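/- arXiv:1806.09734 — 2 statements merged into one kernel-verified Lean document; each statement's English description precedes it below -/
import Mathlib

section
/- For matrices L⁰ and L̂ in ℝ^{m₁×m₂}, with P_{L⁰⊥} the projection X ↦ P_{S₁⊥} X P_{S₂⊥} onto the complement of the row/column spaces of L⁰ and P_{L⁰} = Id − P_{L⁰⊥}, setting ΔL = L⁰ − L̂, one has ‖L⁰‖_* − ‖L̂‖_* ≤ ‖P_{L⁰}(ΔL)‖_* − ‖P_{L⁰⊥}(ΔL)‖_*. -/
open Matrix
/-- The nuclear norm of a real matrix: the trace of `√(Aᵀ A)`, i.e. the sum of the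
singular values of `A`. -/
noncomputable def nuclearNorm {m n : ℕ} (A : Matrix (Fin m) (Fin n) ℝ) : ℝ :=
  (((Matrix.posSemidef_conjTranspose_mul_self A).1.eigenvectorUnitary : Matrix (Fin n) (Fin n) ℝ) *
    diagonal ((RCLike.ofReal : ℝ → ℝ) ∘ (√·) ∘ (Matrix.posSemidef_conjTranspose_mul_self A).1.eigenvalues) *
    (star (Matrix.posSemidef_conjTranspose_mul_self A).1.eigenvectorUnitary :
      Matrix (Fin n) (Fin n) ℝ)).trace

/-- The square root of a real positive semidefinite matrix (formerly `Matrix.PosSemidef.sqrt`). -/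
noncomputable def Matrix.PosSemidef.sqrt {n : ℕ} {S : Matrix (Fin n) (Fin n) ℝ}
    (hS : S.PosSemidef) : Matrix (Fin n) (Fin n) ℝ :=
  (hS.1.eigenvectorUnitary : Matrix (Fin n) (Fin n) ℝ) *
    diagonal ((RCLike.ofReal : ℝ → ℝ) ∘ (√·) ∘ hS.1.eigenvalues) *
    (star hS.1.eigenvectorUnitary : Matrix (Fin n) (Fin n) ℝ)

lemma nuclearNorm_def {m n : ℕ} (A : Matrix (Fin m) (Fin n) ℝ) :
    nuclearNorm A = (Matrix.posSemidef_conjTranspose_mul_self A).sqrt.trace := rfl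

open scoped MatrixOrder in
lemma Matrix.PosSemidef.sqrt_eq_cfc {n : ℕ} {S : Matrix (Fin n) (Fin n) ℝ}
    (hS : S.PosSemidef) : hS.sqrt = CFC.sqrt S := by
  rw [CFC.sqrt_eq_cfc, cfc_nnreal_eq_real _ S, hS.1.cfc_eq]
  simp only [IsHermitian.cfc, Unitary.conjStarAlgAut_apply, Real.coe_sqrt, Real.coe_toNNReal']
  unfold Matrix.PosSemidef.sqrt
  congr 3
  funext i
  simp [max_eq_left (hS.eigenvalues_nonneg i)]

open scoped MatrixOrder in
lemma Matrix.PosSemidef.posSemidef_sqrt {n : ℕ} {S : Matrix (Fin n) (Fin n) ℝ}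
    (hS : S.PosSemidef) : hS.sqrt.PosSemidef := by
  rw [hS.sqrt_eq_cfc]; exact (CFC.sqrt_nonneg S).posSemidef

open scoped MatrixOrder in
lemma Matrix.PosSemidef.sqrt_mul_self {n : ℕ} {S : Matrix (Fin n) (Fin n) ℝ}
    (hS : S.PosSemidef) : hS.sqrt * hS.sqrt = S := by
  rw [hS.sqrt_eq_cfc]; exact CFC.sqrt_mul_sqrt_self S hS.nonneg

open scoped MatrixOrder in
lemma Matrix.PosSemidef.eq_sqrt_of_sq_eq {n : ℕ} {A B : Matrix (Fin n) (Fin n) ℝ}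
    (hA : A.PosSemidef) (hB : B.PosSemidef) (hAB : A ^ 2 = B) : A = hB.sqrt := by
  rw [hB.sqrt_eq_cfc, ← hAB, CFC.sqrt_sq A hA.nonneg]

lemma sqrt_congr {n : ℕ} {S T : Matrix (Fin n) (Fin n) ℝ} (h : S = T)
    (hS : S.PosSemidef) (hT : T.PosSemidef) : hS.sqrt = hT.sqrt := by
  subst h; rfl

lemma nuclearNorm_congr {m n : ℕ} {A B : Matrix (Fin m) (Fin n) ℝ}
    (h : Aᴴ * A = Bᴴ * B) : nuclearNorm A = nuclearNorm B := by
  rw [nuclearNorm_def, nuclearNorm_def]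
  rw [sqrt_congr h (Matrix.posSemidef_conjTranspose_mul_self A)
    (Matrix.posSemidef_conjTranspose_mul_self B)]

lemma nuclearNorm_neg {m n : ℕ} (A : Matrix (Fin m) (Fin n) ℝ) :
    nuclearNorm (-A) = nuclearNorm A := by
  apply nuclearNorm_congr; simp

lemma sqrt_symm {n : ℕ} {S : Matrix (Fin n) (Fin n) ℝ} (hS : S.PosSemidef) :
    hS.sqrtᵀ = hS.sqrt := by
  have := hS.posSemidef_sqrt.isHermitian.eq
  rwa [conjTranspose_eq_transpose_of_trivial] at this

lemma symm_of_psd {n : ℕ} {S : Matrix (Fin n) (Fin n) ℝ} (hS : S.PosSemidef) :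
    Sᵀ = S := by
  have := hS.isHermitian.eq
  rwa [conjTranspose_eq_transpose_of_trivial] at this

-- sqrt kills left-annihilators
lemma sqrt_mul_eq_zero {n k : ℕ} {S : Matrix (Fin n) (Fin n) ℝ} (hS : S.PosSemidef)
    {Z : Matrix (Fin n) (Fin k) ℝ} (h : S * Z = 0) : hS.sqrt * Z = 0 := by
  have h1 : (hS.sqrt * Z)ᴴ * (hS.sqrt * Z) = 0 := by
    rw [conjTranspose_mul, conjTranspose_eq_transpose_of_trivial,
      conjTranspose_eq_transpose_of_trivial, sqrt_symm hS, Matrix.mul_assoc,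
      ← Matrix.mul_assoc hS.sqrt, hS.sqrt_mul_self, h, Matrix.mul_zero]
  exact conjTranspose_mul_self_eq_zero.mp h1

lemma sqrt_mul_sqrt_eq_zero {n : ℕ} {S T : Matrix (Fin n) (Fin n) ℝ}
    (hS : S.PosSemidef) (hT : T.PosSemidef) (h : S * T = 0) :
    hS.sqrt * hT.sqrt = 0 := by
  have h1 : hS.sqrt * T = 0 := sqrt_mul_eq_zero hS h
  have h2 : T * hS.sqrt = 0 := by
    have := congrArg transpose h1
    simpa [transpose_mul, symm_of_psd hT, sqrt_symm hS] using this
  have h3 : hT.sqrt * hS.sqrt = 0 := sqrt_mul_eq_zero hT h2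
  have := congrArg transpose h3
  simpa [transpose_mul, sqrt_symm hT, sqrt_symm hS] using this

lemma nuclearNorm_add_of_orth {m n : ℕ} {X Y : Matrix (Fin m) (Fin n) ℝ}
    (h1 : Xᴴ * Y = 0) (h2 : X * Yᴴ = 0) :
    nuclearNorm (X + Y) = nuclearNorm X + nuclearNorm Y := by
  have h1' : Yᴴ * X = 0 := by
    have := congrArg conjTranspose h1; simpa [conjTranspose_mul] using this
  have hXS := Matrix.posSemidef_conjTranspose_mul_self X
  have hYS := Matrix.posSemidef_conjTranspose_mul_self Y
  have hsum : (X + Y)ᴴ * (X + Y) = Xᴴ * X + Yᴴ * Y := by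
    rw [conjTranspose_add, Matrix.add_mul, Matrix.mul_add, Matrix.mul_add, h1, h1']
    abel
  have horth : (Xᴴ * X) * (Yᴴ * Y) = 0 := by
    rw [Matrix.mul_assoc, ← Matrix.mul_assoc X, h2, Matrix.zero_mul, Matrix.mul_zero]
  have hsqrt0 : hXS.sqrt * hYS.sqrt = 0 := sqrt_mul_sqrt_eq_zero hXS hYS horth
  have hsqrt0' : hYS.sqrt * hXS.sqrt = 0 := by
    have := congrArg transpose hsqrt0
    simpa [transpose_mul, sqrt_symm hXS, sqrt_symm hYS] using this
  have hpsd : (hXS.sqrt + hYS.sqrt).PosSemidef := hXS.posSemidef_sqrt.add hYS.posSemidef_sqrt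
  have hsq : (hXS.sqrt + hYS.sqrt) ^ 2 = (X + Y)ᴴ * (X + Y) := by
    rw [hsum, pow_two, add_mul, mul_add, mul_add, hsqrt0, hsqrt0',
      hXS.sqrt_mul_self, hYS.sqrt_mul_self]
    abel
  have := hpsd.eq_sqrt_of_sq_eq (Matrix.posSemidef_conjTranspose_mul_self (X + Y)) hsq
  rw [nuclearNorm_def, nuclearNorm_def, nuclearNorm_def]
  rw [← this, trace_add]

variable {m n : ℕ}

noncomputable def svdμ (M : Matrix (Fin m) (Fin n) ℝ) : Fin n → ℝ :=
  (Matrix.posSemidef_conjTranspose_mul_self M).1.eigenvalues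

noncomputable def svdV (M : Matrix (Fin m) (Fin n) ℝ) : Matrix (Fin n) (Fin n) ℝ :=
  ((Matrix.posSemidef_conjTranspose_mul_self M).1.eigenvectorUnitary : Matrix (Fin n) (Fin n) ℝ)

noncomputable def svdU (M : Matrix (Fin m) (Fin n) ℝ) : Matrix (Fin m) (Fin n) ℝ :=
  M * svdV M * diagonal (fun j => (Real.sqrt (svdμ M j))⁻¹)

lemma svdμ_nonneg (M : Matrix (Fin m) (Fin n) ℝ) (j : Fin n) : 0 ≤ svdμ M j :=
  (Matrix.posSemidef_conjTranspose_mul_self M).eigenvalues_nonneg j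

lemma svdV_mul_transpose (M : Matrix (Fin m) (Fin n) ℝ) : svdV M * (svdV M)ᵀ = 1 := by
  have h := ((Matrix.posSemidef_conjTranspose_mul_self M).1.eigenvectorUnitary).2
  have := (Matrix.mem_unitaryGroup_iff).mp h
  simp only [star_eq_conjTranspose, conjTranspose_eq_transpose_of_trivial] at this
  exact this

lemma transpose_mul_svdV (M : Matrix (Fin m) (Fin n) ℝ) : (svdV M)ᵀ * svdV M = 1 := by
  have h := ((Matrix.posSemidef_conjTranspose_mul_self M).1.eigenvectorUnitary).2
  have := (Matrix.mem_unitaryGroup_iff').mp h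
  simp only [star_eq_conjTranspose, conjTranspose_eq_transpose_of_trivial] at this
  exact this

lemma svdV_diag (M : Matrix (Fin m) (Fin n) ℝ) :
    (svdV M)ᵀ * (Mᴴ * M) * svdV M = diagonal (svdμ M) := by
  have h := (Matrix.posSemidef_conjTranspose_mul_self M).1.conjStarAlgAut_star_eigenvectorUnitary
  simp only [Unitary.conjStarAlgAut_apply, Unitary.coe_star, star_star] at h
  simp only [star_eq_conjTranspose, conjTranspose_eq_transpose_of_trivial] at h
  rw [conjTranspose_eq_transpose_of_trivial]
  exact h

lemma nuclearNorm_eq_sum_sqrt (M : Matrix (Fin m) (Fin n) ℝ) :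
    nuclearNorm M = ∑ j, Real.sqrt (svdμ M j) := by
  unfold nuclearNorm
  rw [Matrix.trace_mul_cycle]
  rw [star_eq_conjTranspose, conjTranspose_eq_transpose_of_trivial]
  show (((svdV M)ᵀ * svdV M) * diagonal _).trace = _
  rw [transpose_mul_svdV, Matrix.one_mul, trace_diagonal]
  simp only [RCLike.ofReal_real_eq_id, Function.comp_apply, id_eq]
  rfl

lemma diagonal_congr {k : ℕ} {f g : Fin k → ℝ} (h : ∀ j, f j = g j) :
    diagonal f = diagonal g := by rw [funext h]

lemma col_sq_sum {k l : ℕ} (X : Matrix (Fin k) (Fin l) ℝ) (j : Fin l) :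
    (Xᵀ * X) j j = ∑ i, (X i j) ^ 2 := by
  simp [Matrix.mul_apply, pow_two]

lemma hMV (M : Matrix (Fin m) (Fin n) ℝ) :
    (M * svdV M)ᵀ * (M * svdV M) = diagonal (svdμ M) := by
  have h := svdV_diag M
  rw [conjTranspose_eq_transpose_of_trivial] at h
  rw [transpose_mul, Matrix.mul_assoc, ← Matrix.mul_assoc Mᵀ M (svdV M),
    ← Matrix.mul_assoc]
  exact h

lemma MV_col_sq (M : Matrix (Fin m) (Fin n) ℝ) (j : Fin n) :
    ∑ i, ((M * svdV M) i j) ^ 2 = svdμ M j := by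
  rw [← col_sq_sum, hMV, diagonal_apply_eq]

lemma MV_col_zero (M : Matrix (Fin m) (Fin n) ℝ) (j : Fin n) (hj : svdμ M j = 0)
    (i : Fin m) : (M * svdV M) i j = 0 := by
  have h := MV_col_sq M j
  rw [hj] at h
  have := (Finset.sum_eq_zero_iff_of_nonneg (fun i _ => sq_nonneg ((M * svdV M) i j))).mp h
    i (Finset.mem_univ i)
  exact pow_eq_zero_iff (two_ne_zero) |>.mp this

lemma svd_decomp (M : Matrix (Fin m) (Fin n) ℝ) :
    svdU M * diagonal (fun j => Real.sqrt (svdμ M j)) * (svdV M)ᵀ = M := by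
  unfold svdU
  rw [Matrix.mul_assoc (M * svdV M), diagonal_mul_diagonal]
  have key : M * svdV M * diagonal (fun j => (Real.sqrt (svdμ M j))⁻¹ * Real.sqrt (svdμ M j))
      = M * svdV M := by
    ext i j
    rw [Matrix.mul_diagonal]
    rcases eq_or_ne (svdμ M j) 0 with h | h
    · rw [MV_col_zero M j h, zero_mul]
    · rw [inv_mul_cancel₀, mul_one]
      exact Real.sqrt_ne_zero'.mpr (lt_of_le_of_ne (svdμ_nonneg M j) (Ne.symm h))
  rw [key, Matrix.mul_assoc, svdV_mul_transpose, Matrix.mul_one]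

lemma svdU_transpose_mul (M : Matrix (Fin m) (Fin n) ℝ) :
    (svdU M)ᵀ * svdU M = diagonal (fun j => if svdμ M j = 0 then 0 else 1) := by
  unfold svdU
  rw [transpose_mul, diagonal_transpose, Matrix.mul_assoc, ← Matrix.mul_assoc (M * svdV M)ᵀ,
    hMV, diagonal_mul_diagonal, diagonal_mul_diagonal]
  apply diagonal_congr
  intro j
  rcases eq_or_ne (svdμ M j) 0 with h | h
  · simp [h]
  · have hpos : 0 < svdμ M j := lt_of_le_of_ne (svdμ_nonneg M j) (Ne.symm h)
    have hs : Real.sqrt (svdμ M j) * Real.sqrt (svdμ M j) = svdμ M j :=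
      Real.mul_self_sqrt (le_of_lt hpos)
    have hsne : Real.sqrt (svdμ M j) ≠ 0 := Real.sqrt_ne_zero'.mpr hpos
    rw [if_neg h]
    field_simp
    rw [sq, hs]

lemma svdU_mul_diag_indicator (M : Matrix (Fin m) (Fin n) ℝ) :
    svdU M * diagonal (fun j => if svdμ M j = 0 then (0:ℝ) else 1) = svdU M := by
  unfold svdU
  rw [Matrix.mul_assoc, diagonal_mul_diagonal]
  congr 1
  apply diagonal_congr
  intro j
  rcases eq_or_ne (svdμ M j) 0 with h | h
  · simp [h]
  · simp [h]

-- contraction property from idempotent gram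
lemma contraction_of_proj {a b : ℕ} (U : Matrix (Fin a) (Fin b) ℝ)
    (h : U * Uᵀ * (U * Uᵀ) = U * Uᵀ) (x : Fin a → ℝ) :
    (Uᵀ *ᵥ x) ⬝ᵥ (Uᵀ *ᵥ x) ≤ x ⬝ᵥ x := by
  set P := U * Uᵀ with hP
  have hPsym : Pᵀ = P := by rw [hP, transpose_mul, transpose_transpose]
  set y := P *ᵥ x with hy
  have c1 : (Uᵀ *ᵥ x) ⬝ᵥ (Uᵀ *ᵥ x) = x ⬝ᵥ y := by
    rw [hy, hP, ← mulVec_mulVec, Matrix.dotProduct_mulVec x U, ← Matrix.mulVec_transpose]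
  have c2 : y ⬝ᵥ y = x ⬝ᵥ y := by
    rw [hy, Matrix.dotProduct_mulVec (P *ᵥ x) P, ← Matrix.mulVec_transpose, hPsym,
      mulVec_mulVec, h]
    rw [Matrix.dotProduct_mulVec x P, ← Matrix.mulVec_transpose, hPsym]
  have hnn : 0 ≤ (x - y) ⬝ᵥ (x - y) := Finset.sum_nonneg fun i _ => mul_self_nonneg _
  have expand : (x - y) ⬝ᵥ (x - y) = x ⬝ᵥ x - x ⬝ᵥ y := by
    rw [sub_dotProduct, dotProduct_sub, dotProduct_sub, c2]
    rw [dotProduct_comm y x]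
    ring
  rw [c1]
  linarith [hnn, expand.symm.le]

lemma svdU_contraction (C : Matrix (Fin m) (Fin n) ℝ) (x : Fin m → ℝ) :
    ((svdU C)ᵀ *ᵥ x) ⬝ᵥ ((svdU C)ᵀ *ᵥ x) ≤ x ⬝ᵥ x := by
  apply contraction_of_proj
  rw [Matrix.mul_assoc, ← Matrix.mul_assoc (svdU C)ᵀ (svdU C) (svdU C)ᵀ,
    svdU_transpose_mul, ← Matrix.mul_assoc, svdU_mul_diag_indicator]

lemma svdV_contraction (C : Matrix (Fin m) (Fin n) ℝ) (x : Fin n → ℝ) :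
    ((svdV C)ᵀ *ᵥ x) ⬝ᵥ ((svdV C)ᵀ *ᵥ x) ≤ x ⬝ᵥ x := by
  apply contraction_of_proj
  rw [svdV_mul_transpose, Matrix.one_mul]

lemma uTu_diag_le_one (C : Matrix (Fin m) (Fin n) ℝ) (j : Fin n) :
    (∑ i, (svdU C i j) ^ 2) ≤ 1 := by
  rw [← col_sq_sum, svdU_transpose_mul, diagonal_apply_eq]
  split <;> norm_num

lemma vTv_diag_eq_one (C : Matrix (Fin m) (Fin n) ℝ) (j : Fin n) :
    (∑ i, (svdV C i j) ^ 2) = 1 := by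
  rw [← col_sq_sum, transpose_mul_svdV, Matrix.one_apply_eq]

lemma trace_le_nuclearNorm (A U : Matrix (Fin m) (Fin n) ℝ) (W : Matrix (Fin n) (Fin n) ℝ)
    (hU : ∀ x, (Uᵀ *ᵥ x) ⬝ᵥ (Uᵀ *ᵥ x) ≤ x ⬝ᵥ x)
    (hW : ∀ x, (Wᵀ *ᵥ x) ⬝ᵥ (Wᵀ *ᵥ x) ≤ x ⬝ᵥ x) :
    (Uᵀ * A * W).trace ≤ nuclearNorm A := by
  set X := Uᵀ * svdU A with hX
  set Y := (svdV A)ᵀ * W with hY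
  set D := diagonal (fun j => Real.sqrt (svdμ A j)) with hD
  have hre : Uᵀ * A * W = X * D * Y := by
    conv_lhs => rw [← svd_decomp A]
    rw [hX, hY, hD]
    simp only [Matrix.mul_assoc]
  rw [hre, ← Matrix.trace_mul_cycle D Y X]
  have htr : (D * Y * X).trace = ∑ j, Real.sqrt (svdμ A j) * (∑ k, Y j k * X k j) := by
    have e1 : (D * Y * X).trace = ∑ j, (D * Y * X) j j := rfl
    rw [e1]
    apply Finset.sum_congr rfl
    intro j _
    rw [Matrix.mul_apply]
    rw [Finset.mul_sum]
    apply Finset.sum_congr rfl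
    intro k _
    rw [hD, Matrix.diagonal_mul, mul_assoc]
  rw [htr, nuclearNorm_eq_sum_sqrt]
  apply Finset.sum_le_sum
  intro j _
  have hc : (∑ k, Y j k * X k j) ≤ 1 := by
    have hCS := Finset.sum_mul_sq_le_sq_mul_sq Finset.univ (fun k => Y j k) (fun k => X k j)
    have hYb : (∑ k, (Y j k) ^ 2) ≤ 1 := by
      have h1 : (fun k => Y j k) = Wᵀ *ᵥ (fun i => svdV A i j) := by
        funext k
        simp [hY, Matrix.mul_apply, Matrix.mulVec, dotProduct, mul_comm]
      have h2 := hW (fun i => svdV A i j)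
      have h3 : (fun i => svdV A i j) ⬝ᵥ (fun i => svdV A i j) = 1 := by
        simpa [dotProduct, pow_two] using vTv_diag_eq_one A j
      calc (∑ k, (Y j k) ^ 2) = (Wᵀ *ᵥ (fun i => svdV A i j)) ⬝ᵥ (Wᵀ *ᵥ (fun i => svdV A i j)) := by
            rw [← h1]; simp [dotProduct, pow_two]
        _ ≤ 1 := by rw [← h3]; exact h2
    have hXb : (∑ k, (X k j) ^ 2) ≤ 1 := by
      have h1 : (fun k => X k j) = Uᵀ *ᵥ (fun i => svdU A i j) := by
        funext k
        simp [hX, Matrix.mul_apply, Matrix.mulVec, dotProduct, mul_comm]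
      have h2 := hU (fun i => svdU A i j)
      have h3 : (fun i => svdU A i j) ⬝ᵥ (fun i => svdU A i j) ≤ 1 := by
        simpa [dotProduct, pow_two] using uTu_diag_le_one A j
      calc (∑ k, (X k j) ^ 2) = (Uᵀ *ᵥ (fun i => svdU A i j)) ⬝ᵥ (Uᵀ *ᵥ (fun i => svdU A i j)) := by
            rw [← h1]; simp [dotProduct, pow_two]
        _ ≤ 1 := le_trans h2 h3
    have hsq : (∑ k, Y j k * X k j) ^ 2 ≤ 1 := by
      calc (∑ k, Y j k * X k j) ^ 2 ≤ (∑ k, (Y j k)^2) * (∑ k, (X k j)^2) := hCS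
        _ ≤ 1 := by
          have hXnn : (0:ℝ) ≤ ∑ k, (X k j)^2 := Finset.sum_nonneg fun k _ => sq_nonneg _
          have hYnn : (0:ℝ) ≤ ∑ k, (Y j k)^2 := Finset.sum_nonneg fun k _ => sq_nonneg _
          nlinarith
    nlinarith
  calc Real.sqrt (svdμ A j) * (∑ k, Y j k * X k j) ≤ Real.sqrt (svdμ A j) * 1 :=
        mul_le_mul_of_nonneg_left hc (Real.sqrt_nonneg _)
    _ = Real.sqrt (svdμ A j) := mul_one _

lemma nuclearNorm_eq_trace_rep (C : Matrix (Fin m) (Fin n) ℝ) :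
    ((svdU C)ᵀ * C * svdV C).trace = nuclearNorm C := by
  have h1 : (svdU C)ᵀ * C * svdV C
      = diagonal (fun j => (Real.sqrt (svdμ C j))⁻¹) * ((C * svdV C)ᵀ * (C * svdV C)) := by
    unfold svdU
    rw [transpose_mul, diagonal_transpose]
    simp only [Matrix.mul_assoc]
  rw [h1, hMV, diagonal_mul_diagonal, trace_diagonal, nuclearNorm_eq_sum_sqrt]
  apply Finset.sum_congr rfl
  intro j _
  rcases eq_or_ne (svdμ C j) 0 with h | h
  · simp [h]
  · have hpos : 0 < svdμ C j := lt_of_le_of_ne (svdμ_nonneg C j) (Ne.symm h)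
    have hs : Real.sqrt (svdμ C j) * Real.sqrt (svdμ C j) = svdμ C j :=
      Real.mul_self_sqrt (le_of_lt hpos)
    have hsne : Real.sqrt (svdμ C j) ≠ 0 := Real.sqrt_ne_zero'.mpr hpos
    field_simp
    rw [sq, hs]

lemma nuclearNorm_triangle (A B : Matrix (Fin m) (Fin n) ℝ) :
    nuclearNorm (A + B) ≤ nuclearNorm A + nuclearNorm B := by
  rw [← nuclearNorm_eq_trace_rep (A + B)]
  have expand : (svdU (A+B))ᵀ * (A+B) * svdV (A+B)
      = (svdU (A+B))ᵀ * A * svdV (A+B) + (svdU (A+B))ᵀ * B * svdV (A+B) := by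
    rw [Matrix.mul_add, Matrix.add_mul]
  rw [expand, trace_add]
  exact add_le_add
    (trace_le_nuclearNorm A (svdU (A+B)) (svdV (A+B)) (svdU_contraction (A+B))
      (svdV_contraction (A+B)))
    (trace_le_nuclearNorm B (svdU (A+B)) (svdV (A+B)) (svdU_contraction (A+B))
      (svdV_contraction (A+B)))

/-- Let `P₁` be the orthogonal projector onto the orthogonal complement of the column
space of `L⁰` (characterized by: symmetric, idempotent, range inside `ker L⁰ᵀ`, fixing
`ker L⁰ᵀ`), and `P₂` the orthogonal projector onto the orthogonal complement of the row
space of `L⁰`. With `P_{L⁰⊥}(X) = P₁ X P₂` and `P_{L⁰} = Id - P_{L⁰⊥}`, and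
`ΔL = L⁰ - L̂`, one has `‖L⁰‖_* - ‖L̂‖_* ≤ ‖P_{L⁰}(ΔL)‖_* - ‖P_{L⁰⊥}(ΔL)‖_*`. -/
theorem stmt2 {m₁ m₂ : ℕ} (L0 Lhat : Matrix (Fin m₁) (Fin m₂) ℝ)
    (P1 : Matrix (Fin m₁) (Fin m₁) ℝ) (P2 : Matrix (Fin m₂) (Fin m₂) ℝ)
    (hP1sym : P1ᵀ = P1) (hP1idem : P1 * P1 = P1)
    (hP1range : L0ᵀ * P1 = 0)
    (hP1fix : ∀ x : Fin m₁ → ℝ, L0ᵀ.mulVec x = 0 → P1.mulVec x = x)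
    (hP2sym : P2ᵀ = P2) (hP2idem : P2 * P2 = P2)
    (hP2range : L0 * P2 = 0)
    (hP2fix : ∀ x : Fin m₂ → ℝ, L0.mulVec x = 0 → P2.mulVec x = x) :
    nuclearNorm L0 - nuclearNorm Lhat ≤
      nuclearNorm ((L0 - Lhat) - P1 * (L0 - Lhat) * P2) -
        nuclearNorm (P1 * (L0 - Lhat) * P2) := by
  set ΔL := L0 - Lhat with hΔL
  set A := P1 * ΔL * P2 with hA
  set B := ΔL - A with hB
  have hL0tA : L0ᴴ * A = 0 := by
    rw [conjTranspose_eq_transpose_of_trivial, hA, ← Matrix.mul_assoc, ← Matrix.mul_assoc,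
      hP1range, Matrix.zero_mul, Matrix.zero_mul]
  have hL0At : L0 * Aᴴ = 0 := by
    rw [conjTranspose_eq_transpose_of_trivial, hA, transpose_mul, transpose_mul, hP2sym,
      hP1sym, ← Matrix.mul_assoc, hP2range, Matrix.zero_mul]
  have hadd : nuclearNorm (L0 + (-A)) = nuclearNorm L0 + nuclearNorm (-A) := by
    apply nuclearNorm_add_of_orth
    · rw [Matrix.mul_neg, hL0tA, neg_zero]
    · rw [conjTranspose_neg, Matrix.mul_neg, hL0At, neg_zero]
  rw [nuclearNorm_neg] at hadd
  have hEq : L0 + (-A) = Lhat + B := by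
    rw [hB, hΔL]; abel
  have htri : nuclearNorm (Lhat + B) ≤ nuclearNorm Lhat + nuclearNorm B :=
    nuclearNorm_triangle Lhat B
  rw [← hEq, hadd] at htri
  linarith
end

section
/- Let f : [−1,1]^n → ℝ be defined by f(x) = sup_{α ∈ A} |Σ_{i=1}^n (x_i − π_i) a_i(α)²| where A is a nonempty set, π_i ∈ [p,1] with p > 0, |a_i(α)| ≤ 1 for all i and α, and Σ_i π_i a_i(α)² ≤ T for all α ∈ A. Then f is Lipschitz with respect to the Euclidean norm with constant √(T/p). -/
/-- The function `x ↦ sup_{α ∈ A} |Σ_i (x_i - π_i) a_i(α)²|` on the cube `[-1,1]^n`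
is Lipschitz with constant `√(T/p)` with respect to the Euclidean norm, where
`π_i ∈ [p, 1]`, `|a_i(α)| ≤ 1` and `Σ_i π_i a_i(α)² ≤ T` for all `α ∈ A`. -/
theorem stmt8 {n : ℕ} {ι : Type*} [Nonempty ι] (p T : ℝ)
    (hp : 0 < p) (hp1 : p ≤ 1) (hT : 0 < T)
    (π : Fin n → ℝ) (hπ : ∀ i, π i ∈ Set.Icc p 1)
    (a : ι → Fin n → ℝ) (ha : ∀ α i, |a α i| ≤ 1)
    (haT : ∀ α, ∑ i, π i * (a α i) ^ 2 ≤ T)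
    (x z : EuclideanSpace ℝ (Fin n))
    (hx : ∀ i, x i ∈ Set.Icc (-1 : ℝ) 1) (hz : ∀ i, z i ∈ Set.Icc (-1 : ℝ) 1) :
    |(⨆ α, |∑ i, (x i - π i) * (a α i) ^ 2|) - (⨆ α, |∑ i, (z i - π i) * (a α i) ^ 2|)| ≤
      Real.sqrt (T / p) * ‖x - z‖ := by
  set K := Real.sqrt (T / p) * ‖x - z‖ with hKdef
  have hπpos : ∀ i, 0 < π i := fun i => lt_of_lt_of_le hp (hπ i).1
  have hnorm : ∑ i, (x i - z i) ^ 2 = ‖x - z‖ ^ 2 := by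
    rw [EuclideanSpace.norm_eq, Real.sq_sqrt (Finset.sum_nonneg fun i _ => sq_nonneg _)]
    congr 1; ext i
    simp [sq_abs]
  -- Key pointwise bound via Cauchy–Schwarz
  have key : ∀ α : ι,
      |∑ i, (x i - π i) * (a α i) ^ 2| - |∑ i, (z i - π i) * (a α i) ^ 2| ≤ K ∧
      |∑ i, (z i - π i) * (a α i) ^ 2| - |∑ i, (x i - π i) * (a α i) ^ 2| ≤ K := by
    intro α
    have hstep : |∑ i, (x i - π i) * (a α i) ^ 2 - ∑ i, (z i - π i) * (a α i) ^ 2| ≤ K := by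
      rw [← Finset.sum_sub_distrib]
      have h1 : |∑ i, ((x i - π i) * (a α i) ^ 2 - (z i - π i) * (a α i) ^ 2)| ≤
          ∑ i, |x i - z i| * (a α i) ^ 2 := by
        refine (Finset.abs_sum_le_sum_abs _ _).trans (Finset.sum_le_sum fun i _ => ?_)
        have h : (x i - π i) * (a α i) ^ 2 - (z i - π i) * (a α i) ^ 2 =
            (x i - z i) * (a α i) ^ 2 := by ring
        rw [h, abs_mul, abs_of_nonneg (sq_nonneg (a α i))]
      refine h1.trans ?_
      -- Cauchy–Schwarz
      have cs := Finset.sum_sq_le_sum_mul_sum_of_sq_eq_mul (Finset.univ : Finset (Fin n))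
        (r := fun i => |x i - z i| * (a α i) ^ 2)
        (f := fun i => (x i - z i) ^ 2 / π i)
        (g := fun i => π i * (a α i) ^ 4)
        (fun i _ => div_nonneg (sq_nonneg _) (hπpos i).le)
        (fun i _ => mul_nonneg (hπpos i).le (by positivity))
        (fun i _ => by
          have hne : π i ≠ 0 := (hπpos i).ne'
          rw [mul_pow, sq_abs]
          field_simp)
      have hsum1 : ∑ i, (x i - z i) ^ 2 / π i ≤ ‖x - z‖ ^ 2 / p := by
        rw [← hnorm, Finset.sum_div]
        exact Finset.sum_le_sum fun i _ =>
          div_le_div_of_nonneg_left (sq_nonneg _) hp (hπ i).1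
      have hsum2 : ∑ i, π i * (a α i) ^ 4 ≤ T := by
        refine le_trans (Finset.sum_le_sum fun i _ => ?_) (haT α)
        have hsq : (a α i) ^ 2 ≤ 1 := by
          nlinarith [sq_abs (a α i), abs_nonneg (a α i), ha α i]
        have h4 : (a α i) ^ 4 ≤ (a α i) ^ 2 := by
          nlinarith [sq_nonneg (a α i)]
        exact mul_le_mul_of_nonneg_left h4 (hπpos i).le
      have hle : (∑ i, |x i - z i| * (a α i) ^ 2) ^ 2 ≤ (‖x - z‖ ^ 2 / p) * T := by
        refine cs.trans (mul_le_mul hsum1 hsum2 (Finset.sum_nonneg fun i _ =>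
          mul_nonneg (hπpos i).le (by positivity)) (by positivity))
      have hKsq : K ^ 2 = (‖x - z‖ ^ 2 / p) * T := by
        rw [hKdef, mul_pow, Real.sq_sqrt (by positivity)]
        ring
      have hKnn : 0 ≤ K := mul_nonneg (Real.sqrt_nonneg _) (norm_nonneg _)
      nlinarith [Finset.sum_nonneg (fun i (_ : i ∈ Finset.univ) =>
        mul_nonneg (abs_nonneg (x i - z i)) (sq_nonneg (a α i)))]
    constructor
    · have := (abs_sub_abs_le_abs_sub (∑ i, (x i - π i) * (a α i) ^ 2)
        (∑ i, (z i - π i) * (a α i) ^ 2)).trans hstep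
      linarith
    · have habs : |∑ i, (z i - π i) * (a α i) ^ 2 - ∑ i, (x i - π i) * (a α i) ^ 2| ≤ K := by
        rwa [abs_sub_comm]
      have := (abs_sub_abs_le_abs_sub (∑ i, (z i - π i) * (a α i) ^ 2)
        (∑ i, (x i - π i) * (a α i) ^ 2)).trans habs
      linarith
  -- Boundedness of the suprema
  have bdd : ∀ (y : EuclideanSpace ℝ (Fin n)), (∀ i, y i ∈ Set.Icc (-1 : ℝ) 1) →
      BddAbove (Set.range fun α => |∑ i, (y i - π i) * (a α i) ^ 2|) := by
    intro y hy
    refine ⟨2 * n, ?_⟩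
    rintro _ ⟨α, rfl⟩
    calc |∑ i, (y i - π i) * (a α i) ^ 2| ≤ ∑ i, |(y i - π i) * (a α i) ^ 2| :=
          Finset.abs_sum_le_sum_abs _ _
      _ ≤ ∑ _i : Fin n, (2 : ℝ) := by
          refine Finset.sum_le_sum fun i _ => ?_
          rw [abs_mul, abs_of_nonneg (sq_nonneg (a α i))]
          have hy1 := (hy i).1; have hy2 := (hy i).2
          have hπ1 := (hπ i).1; have hπ2 := (hπ i).2
          have h1 : |y i - π i| ≤ 2 := by
            rw [abs_le]; constructor <;> nlinarith
          have h2 : (a α i) ^ 2 ≤ 1 := by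
            nlinarith [sq_abs (a α i), ha α i, abs_nonneg (a α i)]
          nlinarith [abs_nonneg (y i - π i)]
      _ = 2 * n := by simp [mul_comm]
  have bddF := bdd x hx
  have bddG := bdd z hz
  rw [abs_sub_le_iff]
  constructor
  · rw [sub_le_iff_le_add]
    refine ciSup_le fun α => ?_
    have h1 := (key α).1
    have h2 := le_ciSup bddG α
    linarith
  · rw [sub_le_iff_le_add]
    refine ciSup_le fun α => ?_
    have h1 := (key α).2
    have h2 := le_ciSup bddF α
    linarith
end
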